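/- For every natural number n ≥ 1 there exists a polynomial P_n in 2n variables with integer coefficients such that for every k ≥ n the following holds in the polynomial ring in one variable u over MvPolynomial (Fin k ⊕ Fin k) ℤ (with variables X_1, …, X_k and Y_1, …, Y_k): the coefficient of u^n in the product Π_{i=1}^{k} Π_{j=1}^{k} (1 + X_i Y_j u) equals P_n evaluated at (e_1(X), …, e_n(X); e_1(Y), …, e_n(Y)), where e_m(X) (resp. e_m(Y)) denotes the m-th elementary symmetric polynomial in the variables X_1, …, X_k (resp. Y_1, …, Y_k). -/

import Mathlib

open Finset MvPolynomial

namespace Stmt14Aux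

/-- Coefficient of `X^m` in `∏ (1 + C (f i) * X)`. -/
lemma coeff_prod_one_add {σ : Type*} [DecidableEq σ] {R : Type*} [CommRing R]
    (s : Finset σ) (f : σ → R) (m : ℕ) :
    (∏ i ∈ s, (1 + Polynomial.C (f i) * Polynomial.X)).coeff m
      = ∑ t ∈ s.powersetCard m, ∏ i ∈ t, f i := by
  induction s using Finset.induction_on generalizing m with
  | empty =>
    cases m with
    | zero => simp
    | succ m => rw [Finset.powersetCard_eq_empty.2 (by simp)]; simp [Polynomial.coeff_one]
  | @insert a s ha ih =>
    rw [Finset.prod_insert ha]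
    cases m with
    | zero =>
      simp only [Finset.powersetCard_zero, Finset.sum_singleton, Finset.prod_empty]
      rw [Polynomial.mul_coeff_zero]
      simp [ih 0]
    | succ m =>
      rw [add_mul, one_mul, Polynomial.coeff_add, mul_assoc, Polynomial.coeff_C_mul,
        Polynomial.coeff_X_mul, ih, ih, Finset.powersetCard_succ_insert ha,
        Finset.sum_union, Finset.sum_image]
      · rw [Finset.mul_sum]
        congr 1
        refine Finset.sum_congr rfl fun t ht => ?_
        rw [Finset.prod_insert fun hat => ha ((Finset.mem_powersetCard.1 ht).1 hat)]
      · intro t ht u hu h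
        have hts := (Finset.mem_powersetCard.1 ht).1
        have hus := (Finset.mem_powersetCard.1 hu).1
        ext x
        constructor
        · intro hx
          have : x ∈ insert a u := by rw [← h]; exact Finset.mem_insert_of_mem hx
          rcases Finset.mem_insert.1 this with rfl | hxu
          · exact absurd (hts hx) ha
          · exact hxu
        · intro hx
          have : x ∈ insert a t := by rw [h]; exact Finset.mem_insert_of_mem hx
          rcases Finset.mem_insert.1 this with rfl | hxt
          · exact absurd (hus hx) ha
          · exact hxt
      · rw [Finset.disjoint_right]
        rintro t ht hts
        obtain ⟨u, hu, rfl⟩ := Finset.mem_image.1 ht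
        exact ha ((Finset.mem_powersetCard.1 hts).1 (Finset.mem_insert_self a u))


noncomputable section
variable (n : ℕ)

/-- The coefficient of `u^n` in `∏ (1 + X_i Y_j u)`. -/
def lhs (k : ℕ) : MvPolynomial (Fin k ⊕ Fin k) ℤ :=
  Polynomial.coeff
    (∏ i : Fin k, ∏ j : Fin k,
      (1 + Polynomial.C (MvPolynomial.X (Sum.inl i) * MvPolynomial.X (Sum.inr j) :
          MvPolynomial (Fin k ⊕ Fin k) ℤ) * Polynomial.X)) n

def Φ (k : ℕ) : Fin n ⊕ Fin n → MvPolynomial (Fin k ⊕ Fin k) ℤ :=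
  Sum.elim
    (fun m : Fin n => rename Sum.inl (esymm (Fin k) ℤ ((m : ℕ) + 1)))
    (fun m : Fin n => rename Sum.inr (esymm (Fin k) ℤ ((m : ℕ) + 1)))

def A (k : ℕ) : MvPolynomial (Fin n ⊕ Fin n) ℤ →ₐ[ℤ] MvPolynomial (Fin k ⊕ Fin k) ℤ :=
  aeval (Φ n k)

lemma lhs_eq (k : ℕ) :
    lhs n k = ∑ S ∈ Finset.powersetCard n (Finset.univ : Finset (Fin k × Fin k)),
      ∏ p ∈ S, (MvPolynomial.X (Sum.inl p.1) * MvPolynomial.X (Sum.inr p.2) :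
        MvPolynomial (Fin k ⊕ Fin k) ℤ) := by
  rw [lhs, ← Fintype.prod_prod_type', coeff_prod_one_add]

/-- weight functions -/
def wR (k : ℕ) : Fin k ⊕ Fin k → ℕ := Sum.elim (fun _ => 1) (fun _ => 0)
def wL (k : ℕ) : Fin k ⊕ Fin k → ℕ := Sum.elim (fun _ => 0) (fun _ => 1)
def wS : Fin n ⊕ Fin n → ℕ := Sum.elim (fun m => (m : ℕ) + 1) (fun _ => 0)
def wT : Fin n ⊕ Fin n → ℕ := Sum.elim (fun _ => 0) (fun m => (m : ℕ) + 1)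

lemma lhs_homog (k : ℕ) (w : Fin k ⊕ Fin k → ℕ)
    (hw : ∀ i j : Fin k, w (Sum.inl i) + w (Sum.inr j) = 1) :
    (lhs n k).IsWeightedHomogeneous w n := by
  rw [lhs_eq]
  apply IsWeightedHomogeneous.sum
  intro S hS
  have hcard := (Finset.mem_powersetCard.1 hS).2
  have h := IsWeightedHomogeneous.prod S
    (fun p : Fin k × Fin k => (X (Sum.inl p.1) * X (Sum.inr p.2) : MvPolynomial (Fin k ⊕ Fin k) ℤ))
    (fun _ => 1) (fun p _ => by
      have h := (isWeightedHomogeneous_X ℤ w (Sum.inl p.1)).mul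
        (isWeightedHomogeneous_X ℤ w (Sum.inr p.2))
      rwa [hw p.1 p.2] at h)
  rwa [Finset.sum_const, hcard, smul_eq_mul, mul_one] at h

lemma lhs_homog_R (k : ℕ) : (lhs n k).IsWeightedHomogeneous (wR k) n :=
  lhs_homog n k _ (fun _ _ => rfl)

lemma lhs_homog_L (k : ℕ) : (lhs n k).IsWeightedHomogeneous (wL k) n :=
  lhs_homog n k _ (fun _ _ => rfl)

lemma homog_pow {τ : Type*} {w : τ → ℕ} {φ : MvPolynomial τ ℤ} {m : ℕ}
    (h : φ.IsWeightedHomogeneous w m) (e : ℕ) :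
    (φ ^ e).IsWeightedHomogeneous w (e * m) := by
  have h2 := IsWeightedHomogeneous.prod (Finset.range e) (fun _ => φ) (fun _ => m)
    (fun _ _ => h)
  simpa using h2

lemma rename_esymm_homog {k m c : ℕ} {τ : Type*} (f : Fin k → τ) (w : τ → ℕ)
    (hw : ∀ i, w (f i) = c) :
    (rename f (esymm (Fin k) ℤ m)).IsWeightedHomogeneous w (m * c) := by
  rw [esymm, map_sum]
  apply IsWeightedHomogeneous.sum
  intro t ht
  rw [map_prod]
  have h := IsWeightedHomogeneous.prod (w := w) t
    (fun i => rename f (X i : MvPolynomial (Fin k) ℤ))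
    (fun _ => c) (fun i _ => by
      rw [rename_X]
      have hX := isWeightedHomogeneous_X ℤ w (f i)
      rwa [hw i] at hX)
  rwa [Finset.sum_const, (Finset.mem_powersetCard.1 ht).2, smul_eq_mul] at h

lemma Φ_homog_R (k : ℕ) (v : Fin n ⊕ Fin n) :
    (Φ n k v).IsWeightedHomogeneous (wR k) (wS n v) := by
  cases v with
  | inl m =>
    simpa [Φ, wS] using rename_esymm_homog (Sum.inl : Fin k → Fin k ⊕ Fin k) (wR k) (fun _ => rfl)
      (m := (m : ℕ) + 1) (c := 1)
  | inr m =>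
    simpa [Φ, wS] using rename_esymm_homog (Sum.inr : Fin k → Fin k ⊕ Fin k) (wR k) (fun _ => rfl)
      (m := (m : ℕ) + 1) (c := 0)

lemma Φ_homog_L (k : ℕ) (v : Fin n ⊕ Fin n) :
    (Φ n k v).IsWeightedHomogeneous (wL k) (wT n v) := by
  cases v with
  | inl m =>
    simpa [Φ, wT] using rename_esymm_homog (Sum.inl : Fin k → Fin k ⊕ Fin k) (wL k) (fun _ => rfl)
      (m := (m : ℕ) + 1) (c := 0)
  | inr m =>
    simpa [Φ, wT] using rename_esymm_homog (Sum.inr : Fin k → Fin k ⊕ Fin k) (wL k) (fun _ => rfl)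
      (m := (m : ℕ) + 1) (c := 1)

lemma aeval_homog {σ τ : Type*} (g : σ → MvPolynomial τ ℤ) (ws : σ → ℕ) (w : τ → ℕ)
    (hg : ∀ v, (g v).IsWeightedHomogeneous w (ws v)) {P : MvPolynomial σ ℤ} {d : ℕ}
    (hP : P.IsWeightedHomogeneous ws d) :
    (aeval g P).IsWeightedHomogeneous w d := by
  conv_lhs => rw [P.as_sum]
  rw [map_sum]
  apply IsWeightedHomogeneous.sum
  intro u hu
  rw [aeval_monomial]
  have h1 : (algebraMap ℤ (MvPolynomial τ ℤ) (coeff u P)).IsWeightedHomogeneous w 0 :=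
    isWeightedHomogeneous_C w _
  have h2 := IsWeightedHomogeneous.prod (w := w) u.support (fun v => g v ^ u v)
    (fun v => u v * ws v) (fun v _ => homog_pow (hg v) (u v))
  have h3 := h1.mul h2
  rw [zero_add] at h3
  have hw : (∑ v ∈ u.support, (fun v => u v * ws v) v) = d := by
    have hcd := hP (mem_support_iff.1 hu)
    rw [← hcd, Finsupp.weight_apply, Finsupp.sum]
    simp [smul_eq_mul]
  rw [hw] at h3
  simpa [Finsupp.prod] using h3

def BY (k : ℕ) : MvPolynomial (Fin n) ℤ →ₐ[ℤ] MvPolynomial (Fin k) ℤ :=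
  aeval (fun i : Fin n => esymm (Fin k) ℤ ((i : ℕ) + 1))

def BX (k : ℕ) : MvPolynomial (Fin n) (MvPolynomial (Fin k) ℤ)
    →ₐ[MvPolynomial (Fin k) ℤ] MvPolynomial (Fin k) (MvPolynomial (Fin k) ℤ) :=
  aeval (fun i : Fin n => esymm (Fin k) (MvPolynomial (Fin k) ℤ) ((i : ℕ) + 1))

lemma BY_injective (k : ℕ) (h : n ≤ k) : Function.Injective (BY n k) := by
  intro p q hpq
  apply esymmAlgHom_fin_injective ℤ h (n := n)
  apply Subtype.ext
  rw [esymmAlgHom_apply, esymmAlgHom_apply]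
  exact hpq

lemma BX_injective (k : ℕ) (h : n ≤ k) : Function.Injective (BX n k) := by
  intro p q hpq
  apply esymmAlgHom_fin_injective (MvPolynomial (Fin k) ℤ) h (n := n)
  apply Subtype.ext
  rw [esymmAlgHom_apply, esymmAlgHom_apply]
  exact hpq

lemma iterToSum_esymm (k m : ℕ) :
    iterToSum ℤ (Fin k) (Fin k) (esymm (Fin k) (MvPolynomial (Fin k) ℤ) m)
      = rename Sum.inl (esymm (Fin k) ℤ m) := by
  simp [esymm, map_sum, map_prod, iterToSum_X, rename_X]

lemma iterToSum_C_esymm (k m : ℕ) :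
    iterToSum ℤ (Fin k) (Fin k) (C (esymm (Fin k) ℤ m))
      = rename Sum.inr (esymm (Fin k) ℤ m) := by
  simp [esymm, map_sum, map_prod, iterToSum_C_X, rename_X]

lemma A_eq (k : ℕ) :
    (A n k).toRingHom =
      (iterToSum ℤ (Fin k) (Fin k)).comp
        (((BX n k).toRingHom.comp (MvPolynomial.map (BY n k).toRingHom)).comp
          (sumToIter ℤ (Fin n) (Fin n))) := by
  apply MvPolynomial.ringHom_ext
  · intro c
    simp only [RingHom.comp_apply, AlgHom.toRingHom_eq_coe, RingHom.coe_coe,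
      sumToIter_C, MvPolynomial.map_C]
    rw [show ((BY n k) (C c) : MvPolynomial (Fin k) ℤ) = C c by
      simp [BY, aeval_C]]
    rw [show ((BX n k) (C (C c)) : MvPolynomial (Fin k) (MvPolynomial (Fin k) ℤ)) = C (C c) by
      rw [← algebraMap_eq]; exact (BX n k).commutes _]
    rw [iterToSum_C_C]
    simp [A, aeval_C]
  · rintro (i | j)
    · simp only [RingHom.comp_apply, AlgHom.toRingHom_eq_coe, RingHom.coe_coe]
      rw [sumToIter_Xl, MvPolynomial.map_X]
      rw [show ((BX n k) (X i)) = esymm (Fin k) (MvPolynomial (Fin k) ℤ) ((i : ℕ) + 1) from aeval_X _ i]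
      rw [iterToSum_esymm]
      simp [A, Φ]
    · simp only [RingHom.comp_apply, AlgHom.toRingHom_eq_coe, RingHom.coe_coe]
      rw [sumToIter_Xr, MvPolynomial.map_C]
      rw [show (((BY n k : MvPolynomial (Fin n) ℤ →+* MvPolynomial (Fin k) ℤ)) (X j)
          : MvPolynomial (Fin k) ℤ) = esymm (Fin k) ℤ ((j : ℕ) + 1) from aeval_X _ j]
      rw [show ((BX n k) (C (esymm (Fin k) ℤ ((j : ℕ) + 1)))) = C (esymm (Fin k) ℤ ((j : ℕ) + 1)) by
        rw [← algebraMap_eq]; exact (BX n k).commutes _]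
      rw [iterToSum_C_esymm]
      simp [A, Φ]

lemma A_apply_eq (k : ℕ) (p : MvPolynomial (Fin n ⊕ Fin n) ℤ) :
    A n k p = iterToSum ℤ (Fin k) (Fin k)
      (BX n k (MvPolynomial.map (BY n k).toRingHom (sumToIter ℤ (Fin n) (Fin n) p))) :=
  RingHom.congr_fun (A_eq n k) p

lemma sumToIter_eq' (σ τ : Type*) (p : MvPolynomial (σ ⊕ τ) ℤ) :
    sumToIter ℤ σ τ p = sumAlgEquiv ℤ σ τ p := by
  have h : sumToIter ℤ σ τ = (sumAlgEquiv ℤ σ τ).toRingEquiv.toRingHom := by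
    apply MvPolynomial.ringHom_ext
    · intro c
      show sumToIter ℤ σ τ (C c) = sumAlgEquiv ℤ σ τ (C c)
      rw [sumToIter_C, sumAlgEquiv_C_inl]
    · rintro (i | j)
      · show sumToIter ℤ σ τ (X (Sum.inl i)) = sumAlgEquiv ℤ σ τ (X (Sum.inl i))
        rw [sumToIter_Xl, sumAlgEquiv_X_inl]
      · show sumToIter ℤ σ τ (X (Sum.inr j)) = sumAlgEquiv ℤ σ τ (X (Sum.inr j))
        rw [sumToIter_Xr, sumAlgEquiv_X_inr]
  exact RingHom.congr_fun h p

lemma iterToSum_eq' (σ τ : Type*) (p : MvPolynomial σ (MvPolynomial τ ℤ)) :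
    iterToSum ℤ σ τ p = (sumAlgEquiv ℤ σ τ).symm p := by
  have h : (iterToSum ℤ σ τ).comp (sumAlgEquiv ℤ σ τ).toRingEquiv.toRingHom = RingHom.id _ := by
    apply MvPolynomial.ringHom_ext
    · intro c
      show iterToSum ℤ σ τ (sumAlgEquiv ℤ σ τ (C c)) = C c
      rw [sumAlgEquiv_C_inl, iterToSum_C_C]
    · rintro (i | j)
      · show iterToSum ℤ σ τ (sumAlgEquiv ℤ σ τ (X (Sum.inl i))) = X (Sum.inl i)
        rw [sumAlgEquiv_X_inl, iterToSum_X]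
      · show iterToSum ℤ σ τ (sumAlgEquiv ℤ σ τ (X (Sum.inr j))) = X (Sum.inr j)
        rw [sumAlgEquiv_X_inr, iterToSum_C_X]
  have h2 := RingHom.congr_fun h ((sumAlgEquiv ℤ σ τ).symm p)
  calc iterToSum ℤ σ τ p = iterToSum ℤ σ τ (sumAlgEquiv ℤ σ τ ((sumAlgEquiv ℤ σ τ).symm p)) := by
        rw [AlgEquiv.apply_symm_apply]
    _ = _ := h2

lemma A_injective (k : ℕ) (h : n ≤ k) : Function.Injective (A n k) := by
  intro p q hpq
  rw [A_apply_eq, A_apply_eq] at hpq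
  have h1 : Function.Injective (iterToSum ℤ (Fin k) (Fin k)) :=
    fun a b hab => (sumAlgEquiv ℤ (Fin k) (Fin k)).symm.injective
      (by rwa [iterToSum_eq', iterToSum_eq'] at hab)
  have h2 : Function.Injective (MvPolynomial.map (σ := Fin n)
      (BY n k : MvPolynomial (Fin n) ℤ →+* MvPolynomial (Fin k) ℤ)) :=
    MvPolynomial.map_injective _ (BY_injective n k h)
  have h3 : Function.Injective (sumToIter ℤ (Fin n) (Fin n)) :=
    fun a b hab => (sumAlgEquiv ℤ (Fin n) (Fin n)).injective
      (by rwa [sumToIter_eq', sumToIter_eq'] at hab)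
  exact h3 (h2 (BX_injective n k h (h1 hpq)))

lemma lhs_rename (k : ℕ) (e₁ e₂ : Equiv.Perm (Fin k)) :
    rename (Sum.map ⇑e₁ ⇑e₂) (lhs n k) = lhs n k := by
  have hmap : Polynomial.map ((rename (Sum.map ⇑e₁ ⇑e₂) :
        MvPolynomial (Fin k ⊕ Fin k) ℤ →ₐ[ℤ] _)).toRingHom
      (∏ i : Fin k, ∏ j : Fin k,
        (1 + Polynomial.C (X (Sum.inl i) * X (Sum.inr j) : MvPolynomial (Fin k ⊕ Fin k) ℤ) *
          Polynomial.X)) =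
      ∏ i : Fin k, ∏ j : Fin k,
        (1 + Polynomial.C (X (Sum.inl i) * X (Sum.inr j) : MvPolynomial (Fin k ⊕ Fin k) ℤ) *
          Polynomial.X) := by
    rw [Polynomial.map_prod]
    rw [← Equiv.prod_comp e₁ (fun i => ∏ j : Fin k,
      (1 + Polynomial.C (X (Sum.inl i) * X (Sum.inr j) : MvPolynomial (Fin k ⊕ Fin k) ℤ) *
        Polynomial.X))]
    refine Finset.prod_congr rfl fun i _ => ?_
    rw [Polynomial.map_prod]
    rw [← Equiv.prod_comp e₂ (fun j => (1 + Polynomial.C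
      (X (Sum.inl (e₁ i)) * X (Sum.inr j) : MvPolynomial (Fin k ⊕ Fin k) ℤ) * Polynomial.X))]
    refine Finset.prod_congr rfl fun j _ => ?_
    simp [Polynomial.map_add, Polynomial.map_mul, Polynomial.map_one, Polynomial.map_C, rename_X]
  have hc := Polynomial.coeff_map ((rename (Sum.map ⇑e₁ ⇑e₂) :
      MvPolynomial (Fin k ⊕ Fin k) ℤ →ₐ[ℤ] _)).toRingHom (p := ∏ i : Fin k, ∏ j : Fin k,
        (1 + Polynomial.C (X (Sum.inl i) * X (Sum.inr j) : MvPolynomial (Fin k ⊕ Fin k) ℤ) *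
          Polynomial.X)) n
  rw [hmap] at hc
  exact hc.symm

lemma Φ_rename (k : ℕ) (e₁ e₂ : Equiv.Perm (Fin k)) (v : Fin n ⊕ Fin n) :
    rename (Sum.map ⇑e₁ ⇑e₂) (Φ n k v) = Φ n k v := by
  cases v with
  | inl m =>
    show rename (Sum.map ⇑e₁ ⇑e₂) (rename Sum.inl (esymm (Fin k) ℤ ((m : ℕ) + 1))) = _
    rw [rename_rename]
    have : Sum.map ⇑e₁ ⇑e₂ ∘ Sum.inl = Sum.inl ∘ ⇑e₁ := rfl
    rw [this, ← rename_rename, rename_esymm]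
    rfl
  | inr m =>
    show rename (Sum.map ⇑e₁ ⇑e₂) (rename Sum.inr (esymm (Fin k) ℤ ((m : ℕ) + 1))) = _
    rw [rename_rename]
    have : Sum.map ⇑e₁ ⇑e₂ ∘ Sum.inr = Sum.inr ∘ ⇑e₂ := rfl
    rw [this, ← rename_rename, rename_esymm]
    rfl

lemma A_rename (k : ℕ) (e₁ e₂ : Equiv.Perm (Fin k)) (p : MvPolynomial (Fin n ⊕ Fin n) ℤ) :
    rename (Sum.map ⇑e₁ ⇑e₂) (A n k p) = A n k p := by
  have h := comp_aeval (f := Φ n k) (φ := rename (Sum.map ⇑e₁ ⇑e₂))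
  have h2 := congrFun (congrArg DFunLike.coe h) p
  simp only [AlgHom.comp_apply] at h2
  have h3 : (fun v => rename (Sum.map ⇑e₁ ⇑e₂) (Φ n k v)) = Φ n k :=
    funext (Φ_rename n k e₁ e₂)
  rw [A, h2, h3]

lemma sumToIter_rename_left (k : ℕ) (e : Equiv.Perm (Fin k)) :
    ((rename ⇑e : MvPolynomial (Fin k) (MvPolynomial (Fin k) ℤ)
        →ₐ[MvPolynomial (Fin k) ℤ] _)).toRingHom.comp (sumToIter ℤ (Fin k) (Fin k)) =
      (sumToIter ℤ (Fin k) (Fin k)).comp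
        (rename (Sum.map ⇑e id) : MvPolynomial (Fin k ⊕ Fin k) ℤ →ₐ[ℤ] _).toRingHom := by
  apply MvPolynomial.ringHom_ext
  · intro c
    simp [sumToIter_C]
  · rintro (i | j)
    · simp [sumToIter_Xl, rename_X]
    · simp [sumToIter_Xr, rename_X]

lemma sumToIter_rename_right (k : ℕ) (e : Equiv.Perm (Fin k)) :
    (MvPolynomial.map (σ := Fin k)
        (rename ⇑e : MvPolynomial (Fin k) ℤ →ₐ[ℤ] _).toRingHom).comp
        (sumToIter ℤ (Fin k) (Fin k)) =
      (sumToIter ℤ (Fin k) (Fin k)).comp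
        (rename (Sum.map id ⇑e) : MvPolynomial (Fin k ⊕ Fin k) ℤ →ₐ[ℤ] _).toRingHom := by
  apply MvPolynomial.ringHom_ext
  · intro c
    simp [sumToIter_C]
  · rintro (i | j)
    · simp [sumToIter_Xl, rename_X]
    · simp [sumToIter_Xr, rename_X]

lemma exists_P : ∃ P : MvPolynomial (Fin n ⊕ Fin n) ℤ, A n n P = lhs n n := by
  set q : MvPolynomial (Fin n) (MvPolynomial (Fin n) ℤ) :=
    sumToIter ℤ (Fin n) (Fin n) (lhs n n) with hq_def
  have hq_symm : q.IsSymmetric := by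
    intro e
    have h := RingHom.congr_fun (sumToIter_rename_left n e) (lhs n n)
    simp only [RingHom.comp_apply] at h
    have hl : rename (Sum.map ⇑e id) (lhs n n) = lhs n n := by
      simpa using lhs_rename n n e (Equiv.refl (Fin n))
    show rename ⇑e q = q
    rw [hq_def]
    calc (rename ⇑e : MvPolynomial (Fin n) (MvPolynomial (Fin n) ℤ)
          →ₐ[MvPolynomial (Fin n) ℤ] _) (sumToIter ℤ (Fin n) (Fin n) (lhs n n))
        = sumToIter ℤ (Fin n) (Fin n) (rename (Sum.map ⇑e id) (lhs n n)) := h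
      _ = _ := by rw [hl]
  obtain ⟨q₁, hq₁⟩ := (esymmAlgHom_fin_bijective (MvPolynomial (Fin n) ℤ) n).2 ⟨q, hq_symm⟩
  have hq₁' : BX n n q₁ = q := by
    have := congrArg Subtype.val hq₁
    rwa [esymmAlgHom_apply] at this
  have hmapq : ∀ e : Equiv.Perm (Fin n),
      MvPolynomial.map (σ := Fin n)
        (rename ⇑e : MvPolynomial (Fin n) ℤ →ₐ[ℤ] _).toRingHom q = q := by
    intro e
    have h := RingHom.congr_fun (sumToIter_rename_right n e) (lhs n n)
    simp only [RingHom.comp_apply] at h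
    have hl : rename (Sum.map id ⇑e) (lhs n n) = lhs n n := by
      simpa using lhs_rename n n (Equiv.refl (Fin n)) e
    rw [hq_def]
    calc MvPolynomial.map (σ := Fin n)
          (rename ⇑e : MvPolynomial (Fin n) ℤ →ₐ[ℤ] _).toRingHom
          (sumToIter ℤ (Fin n) (Fin n) (lhs n n))
        = sumToIter ℤ (Fin n) (Fin n) (rename (Sum.map id ⇑e) (lhs n n)) := h
      _ = _ := by rw [hl]
  have hBXmap : ∀ e : Equiv.Perm (Fin n),
      (BX n n).toRingHom.comp (MvPolynomial.map (σ := Fin n)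
          (rename ⇑e : MvPolynomial (Fin n) ℤ →ₐ[ℤ] _).toRingHom) =
      (MvPolynomial.map (σ := Fin n)
          (rename ⇑e : MvPolynomial (Fin n) ℤ →ₐ[ℤ] _).toRingHom).comp (BX n n).toRingHom := by
    intro e
    apply MvPolynomial.ringHom_ext
    · intro r
      simp only [RingHom.comp_apply, AlgHom.toRingHom_eq_coe, RingHom.coe_coe, MvPolynomial.map_C]
      rw [show ((BX n n) (C r) : MvPolynomial (Fin n) (MvPolynomial (Fin n) ℤ)) = C r by
        rw [← algebraMap_eq]; exact (BX n n).commutes _]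
      rw [show ((BX n n) (C ((rename ⇑e) r)) : MvPolynomial (Fin n) (MvPolynomial (Fin n) ℤ))
          = C ((rename ⇑e) r) by
        rw [← algebraMap_eq]; exact (BX n n).commutes _]
      rw [MvPolynomial.map_C]
      rfl
    · intro i
      simp only [RingHom.comp_apply, AlgHom.toRingHom_eq_coe, RingHom.coe_coe, MvPolynomial.map_X]
      rw [show ((BX n n) (X i) : MvPolynomial (Fin n) (MvPolynomial (Fin n) ℤ))
          = esymm (Fin n) (MvPolynomial (Fin n) ℤ) ((i : ℕ) + 1) from aeval_X _ i]
      rw [map_esymm]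
  have hcoeffsym : ∀ u : Fin n →₀ ℕ, (coeff u q₁).IsSymmetric := by
    intro u e
    have h1 : MvPolynomial.map (σ := Fin n)
        (rename ⇑e : MvPolynomial (Fin n) ℤ →ₐ[ℤ] _).toRingHom q₁ = q₁ := by
      apply BX_injective n n le_rfl
      have h2 := RingHom.congr_fun (hBXmap e) q₁
      simp only [RingHom.comp_apply] at h2
      calc (BX n n) (MvPolynomial.map (σ := Fin n)
            (rename ⇑e : MvPolynomial (Fin n) ℤ →ₐ[ℤ] _).toRingHom q₁)
          = MvPolynomial.map (σ := Fin n)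
            (rename ⇑e : MvPolynomial (Fin n) ℤ →ₐ[ℤ] _).toRingHom ((BX n n) q₁) := h2
        _ = (BX n n) q₁ := by rw [hq₁', hmapq e, ← hq₁']
    have h3 := congrArg (coeff u) h1
    rwa [MvPolynomial.coeff_map] at h3
  choose b hb using fun u => (esymmAlgHom_fin_bijective ℤ n).2 ⟨coeff u q₁, hcoeffsym u⟩
  have hb' : ∀ u, BY n n (b u) = coeff u q₁ := fun u => by
    have := congrArg Subtype.val (hb u)
    rwa [esymmAlgHom_apply] at this
  refine ⟨iterToSum ℤ (Fin n) (Fin n) (∑ u ∈ q₁.support, monomial u (b u)), ?_⟩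
  rw [A_apply_eq]
  rw [show sumToIter ℤ (Fin n) (Fin n) (iterToSum ℤ (Fin n) (Fin n)
      (∑ u ∈ q₁.support, monomial u (b u))) = ∑ u ∈ q₁.support, monomial u (b u) from
    by rw [iterToSum_eq', sumToIter_eq']; exact (sumAlgEquiv ℤ (Fin n) (Fin n)).apply_symm_apply _]
  have hmapsum : MvPolynomial.map (σ := Fin n) (BY n n).toRingHom
      (∑ u ∈ q₁.support, monomial u (b u)) = q₁ := by
    rw [map_sum]
    simp_rw [MvPolynomial.map_monomial]
    conv_rhs => rw [q₁.as_sum]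
    refine Finset.sum_congr rfl fun u _ => ?_
    rw [show (BY n n).toRingHom (b u) = coeff u q₁ from hb' u]
  rw [hmapsum, hq₁']
  rw [hq_def, iterToSum_eq', sumToIter_eq']
  exact (sumAlgEquiv ℤ (Fin n) (Fin n)).symm_apply_apply _

lemma homog_sub {τ : Type*} {w : τ → ℕ} {p q : MvPolynomial τ ℤ} {m : ℕ}
    (hp : p.IsWeightedHomogeneous w m) (hq : q.IsWeightedHomogeneous w m) :
    (p - q).IsWeightedHomogeneous w m := by
  rw [← mem_weightedHomogeneousSubmodule] at hp hq ⊢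
  exact Submodule.sub_mem _ hp hq

lemma P_homog (ws : Fin n ⊕ Fin n → ℕ) (w : Fin n ⊕ Fin n → ℕ)
    (hΦ : ∀ v, (Φ n n v).IsWeightedHomogeneous w (ws v))
    (hlhs : (lhs n n).IsWeightedHomogeneous w n)
    (P : MvPolynomial (Fin n ⊕ Fin n) ℤ) (hP : A n n P = lhs n n) :
    P.IsWeightedHomogeneous ws n := by
  classical
  have hfin : (Function.support fun m => weightedHomogeneousComponent ws m P).Finite :=
    weightedHomogeneousComponent_finsupp (w := ws) (φ := P)
  set S := hfin.toFinset with hS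
  have hdecomp : ∑ m ∈ S, weightedHomogeneousComponent ws m P = P := by
    rw [← finsum_eq_sum _ hfin, sum_weightedHomogeneousComponent]
  have hAcomp : ∀ m, (A n n (weightedHomogeneousComponent ws m P)).IsWeightedHomogeneous w m :=
    fun m => aeval_homog (Φ n n) ws w hΦ (weightedHomogeneousComponent_isWeightedHomogeneous m P)
  have hcomp : ∀ m, m ≠ n → weightedHomogeneousComponent ws m P = 0 := by
    intro m hm
    by_cases hmS : m ∈ S
    · apply A_injective n n le_rfl
      rw [map_zero]
      have h1 : weightedHomogeneousComponent w m (A n n P) =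
          A n n (weightedHomogeneousComponent ws m P) := by
        conv_lhs => rw [← hdecomp]
        rw [map_sum, map_sum]
        rw [Finset.sum_eq_single_of_mem m hmS]
        · exact (hAcomp m).weightedHomogeneousComponent_same
        · intro m' _ hm'
          exact (hAcomp m').weightedHomogeneousComponent_ne m (by exact hm'.symm) |>.symm ▸
            ((hAcomp m').weightedHomogeneousComponent_ne m hm'.symm)
      rw [← h1, hP]
      exact hlhs.weightedHomogeneousComponent_ne m hm
    · rw [hS] at hmS
      rw [Set.Finite.mem_toFinset, Function.mem_support, not_not] at hmS
      exact hmS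
  have hsuff : P = weightedHomogeneousComponent ws n P := by
    conv_lhs => rw [← hdecomp]
    rw [show (∑ m ∈ S, weightedHomogeneousComponent ws m P) =
        ∑ m ∈ S, (if m = n then weightedHomogeneousComponent ws n P else 0) from
      Finset.sum_congr rfl fun m _ => by
        by_cases hmn : m = n
        · rw [if_pos hmn, hmn]
        · rw [if_neg hmn]; exact hcomp m hmn]
    rw [Finset.sum_ite_eq' S n (fun _ => weightedHomogeneousComponent ws n P)]
    split_ifs with hnS
    · rfl
    · rw [hS] at hnS
      rw [Set.Finite.mem_toFinset, Function.mem_support, not_not] at hnS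
      exact hnS.symm
  rw [hsuff]
  exact weightedHomogeneousComponent_isWeightedHomogeneous n P

lemma P_homog_S (P : MvPolynomial (Fin n ⊕ Fin n) ℤ) (hP : A n n P = lhs n n) :
    P.IsWeightedHomogeneous (wS n) n :=
  P_homog n (wS n) (wR n) (Φ_homog_R n n) (lhs_homog_R n n) P hP

lemma P_homog_T (P : MvPolynomial (Fin n ⊕ Fin n) ℤ) (hP : A n n P = lhs n n) :
    P.IsWeightedHomogeneous (wT n) n :=
  P_homog n (wT n) (wL n) (Φ_homog_L n n) (lhs_homog_L n n) P hP

lemma esymm_fin_succ (k m : ℕ) :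
    esymm (Fin (k + 1)) ℤ (m + 1) =
      rename Fin.castSucc (esymm (Fin k) ℤ (m + 1)) +
        X (Fin.last k) * rename Fin.castSucc (esymm (Fin k) ℤ m) := by
  classical
  have hlast : Fin.last k ∉ (Finset.univ : Finset (Fin k)).map Fin.castSuccEmb := by
    simp only [Finset.mem_map, Finset.mem_univ, true_and]
    rintro ⟨i, hi⟩
    exact absurd hi (Fin.castSucc_lt_last i).ne
  have hren : ∀ m' : ℕ, (rename (Fin.castSucc : Fin k → Fin (k + 1)) (esymm (Fin k) ℤ m')) =
      ∑ t ∈ Finset.powersetCard m' ((Finset.univ : Finset (Fin k)).map Fin.castSuccEmb),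
        ∏ i ∈ t, (X i : MvPolynomial (Fin (k + 1)) ℤ) := by
    intro m'
    rw [esymm, map_sum, Finset.powersetCard_map, Finset.sum_map]
    refine Finset.sum_congr rfl fun t _ => ?_
    rw [map_prod]
    rw [show (Finset.mapEmbedding Fin.castSuccEmb).toEmbedding t = t.map Fin.castSuccEmb
      from rfl]
    rw [Finset.prod_map]
    refine Finset.prod_congr rfl fun i _ => ?_
    rw [rename_X]
    rfl
  rw [esymm, Fin.univ_castSuccEmb, Finset.cons_eq_insert,
    Finset.powersetCard_succ_insert hlast, Finset.sum_union, hren, hren]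
  · congr 1
    rw [Finset.sum_image]
    · rw [Finset.mul_sum]
      refine Finset.sum_congr rfl fun t ht => ?_
      rw [Finset.prod_insert fun hmem => hlast ((Finset.mem_powersetCard.1 ht).1 hmem)]
    · intro t ht s hs h
      have hts := (Finset.mem_powersetCard.1 ht).1
      have hss := (Finset.mem_powersetCard.1 hs).1
      ext x
      constructor
      · intro hx
        have : x ∈ insert (Fin.last k) s := by rw [← h]; exact Finset.mem_insert_of_mem hx
        rcases Finset.mem_insert.1 this with rfl | hxu
        · exact absurd (hts hx) hlast
        · exact hxu
      · intro hx
        have : x ∈ insert (Fin.last k) t := by rw [h]; exact Finset.mem_insert_of_mem hx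
        rcases Finset.mem_insert.1 this with rfl | hxt
        · exact absurd (hss hx) hlast
        · exact hxt
  · rw [Finset.disjoint_right]
    rintro t ht hts
    obtain ⟨s, hs, rfl⟩ := Finset.mem_image.1 ht
    exact hlast ((Finset.mem_powersetCard.1 hts).1 (Finset.mem_insert_self _ s))

def emb (k : ℕ) : Fin k ⊕ Fin k → Fin (k + 1) ⊕ Fin (k + 1) :=
  Sum.map Fin.castSucc Fin.castSucc

lemma emb_inj (k : ℕ) : Function.Injective (emb k) :=
  (Fin.castSucc_injective k).sumMap (Fin.castSucc_injective k)

def π (k : ℕ) : MvPolynomial (Fin (k + 1) ⊕ Fin (k + 1)) ℤ →ₐ[ℤ]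
    MvPolynomial (Fin k ⊕ Fin k) ℤ :=
  killCompl (emb_inj k)

lemma π_X_emb (k : ℕ) (v : Fin k ⊕ Fin k) : π k (X (emb k v)) = X v := by
  rw [← rename_X]
  exact killCompl_rename_app _ _

lemma π_X_inl_last (k : ℕ) : π k (X (Sum.inl (Fin.last k))) = 0 := by
  rw [π, killCompl, aeval_X, dif_neg]
  rintro ⟨v, hv⟩
  cases v with
  | inl i =>
    simp only [emb, Sum.map_inl, Sum.inl.injEq] at hv
    exact absurd hv (Fin.castSucc_lt_last i).ne
  | inr i => simp [emb] at hv

lemma π_X_inr_last (k : ℕ) : π k (X (Sum.inr (Fin.last k))) = 0 := by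
  rw [π, killCompl, aeval_X, dif_neg]
  rintro ⟨v, hv⟩
  cases v with
  | inl i => simp [emb] at hv
  | inr i =>
    simp only [emb, Sum.map_inr, Sum.inr.injEq] at hv
    exact absurd hv (Fin.castSucc_lt_last i).ne

lemma π_rename_castSucc_inl (k : ℕ) (p : MvPolynomial (Fin k) ℤ) :
    π k (rename Sum.inl (rename Fin.castSucc p)) = rename Sum.inl p := by
  rw [rename_rename,
    show (Sum.inl ∘ Fin.castSucc : Fin k → Fin (k + 1) ⊕ Fin (k + 1)) = emb k ∘ Sum.inl from rfl,
    ← rename_rename]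
  exact killCompl_rename_app _ _

lemma π_rename_castSucc_inr (k : ℕ) (p : MvPolynomial (Fin k) ℤ) :
    π k (rename Sum.inr (rename Fin.castSucc p)) = rename Sum.inr p := by
  rw [rename_rename,
    show (Sum.inr ∘ Fin.castSucc : Fin k → Fin (k + 1) ⊕ Fin (k + 1)) = emb k ∘ Sum.inr from rfl,
    ← rename_rename]
  exact killCompl_rename_app _ _

lemma π_Φ (k : ℕ) (v : Fin n ⊕ Fin n) : π k (Φ n (k + 1) v) = Φ n k v := by
  cases v with
  | inl m =>
    show π k (rename Sum.inl (esymm (Fin (k + 1)) ℤ ((m : ℕ) + 1)))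
      = rename Sum.inl (esymm (Fin k) ℤ ((m : ℕ) + 1))
    rw [esymm_fin_succ, map_add, map_mul, rename_X, map_add, map_mul, π_X_inl_last,
      zero_mul, add_zero, π_rename_castSucc_inl]
  | inr m =>
    show π k (rename Sum.inr (esymm (Fin (k + 1)) ℤ ((m : ℕ) + 1)))
      = rename Sum.inr (esymm (Fin k) ℤ ((m : ℕ) + 1))
    rw [esymm_fin_succ, map_add, map_mul, rename_X, map_add, map_mul, π_X_inr_last,
      zero_mul, add_zero, π_rename_castSucc_inr]

lemma π_A (k : ℕ) (p : MvPolynomial (Fin n ⊕ Fin n) ℤ) :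
    π k (A n (k + 1) p) = A n k p := by
  have h := comp_aeval (f := Φ n (k + 1)) (φ := π k)
  have h2 := congrFun (congrArg DFunLike.coe h) p
  simp only [AlgHom.comp_apply] at h2
  have h3 : (fun v => π k (Φ n (k + 1) v)) = Φ n k := funext (π_Φ n k)
  rw [A, A, h2, h3]

lemma π_lhs (k : ℕ) : π k (lhs n (k + 1)) = lhs n k := by
  have hmap : Polynomial.map (π k).toRingHom
      (∏ i : Fin (k + 1), ∏ j : Fin (k + 1),
        (1 + Polynomial.C (X (Sum.inl i) * X (Sum.inr j) :
            MvPolynomial (Fin (k + 1) ⊕ Fin (k + 1)) ℤ) * Polynomial.X)) =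
      ∏ i : Fin k, ∏ j : Fin k,
        (1 + Polynomial.C (X (Sum.inl i) * X (Sum.inr j) : MvPolynomial (Fin k ⊕ Fin k) ℤ) *
          Polynomial.X) := by
    rw [Polynomial.map_prod, Fin.prod_univ_castSucc]
    have hlast : Polynomial.map (π k).toRingHom
        (∏ j : Fin (k + 1), (1 + Polynomial.C (X (Sum.inl (Fin.last k)) * X (Sum.inr j) :
            MvPolynomial (Fin (k + 1) ⊕ Fin (k + 1)) ℤ) * Polynomial.X)) = 1 := by
      rw [Polynomial.map_prod]
      apply Finset.prod_eq_one
      intro j _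
      rw [Polynomial.map_add, Polynomial.map_one, Polynomial.map_mul, Polynomial.map_C,
        Polynomial.map_X]
      rw [show (π k).toRingHom (X (Sum.inl (Fin.last k)) * X (Sum.inr j)) = 0 by
        rw [map_mul]
        rw [show (π k).toRingHom (X (Sum.inl (Fin.last k))) = 0 from π_X_inl_last k]
        rw [zero_mul]]
      rw [Polynomial.C_0, zero_mul, add_zero]
    rw [hlast, mul_one]
    refine Finset.prod_congr rfl fun i _ => ?_
    rw [Polynomial.map_prod, Fin.prod_univ_castSucc]
    have hlast2 : Polynomial.map (π k).toRingHom
        (1 + Polynomial.C (X (Sum.inl (Fin.castSucc i)) * X (Sum.inr (Fin.last k)) :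
            MvPolynomial (Fin (k + 1) ⊕ Fin (k + 1)) ℤ) * Polynomial.X) = 1 := by
      rw [Polynomial.map_add, Polynomial.map_one, Polynomial.map_mul, Polynomial.map_C,
        Polynomial.map_X]
      rw [show (π k).toRingHom (X (Sum.inl (Fin.castSucc i)) * X (Sum.inr (Fin.last k))) = 0 by
        rw [map_mul]
        rw [show (π k).toRingHom (X (Sum.inr (Fin.last k))) = 0 from π_X_inr_last k]
        rw [mul_zero]]
      rw [Polynomial.C_0, zero_mul, add_zero]
    rw [hlast2, mul_one]
    refine Finset.prod_congr rfl fun j _ => ?_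
    rw [Polynomial.map_add, Polynomial.map_one, Polynomial.map_mul, Polynomial.map_C,
      Polynomial.map_X]
    congr 2
    rw [map_mul]
    rw [show (π k).toRingHom (X (Sum.inl (Fin.castSucc i))) = X (Sum.inl i) from
      π_X_emb k (Sum.inl i)]
    rw [show (π k).toRingHom (X (Sum.inr (Fin.castSucc j))) = X (Sum.inr j) from
      π_X_emb k (Sum.inr j)]
  have hc := Polynomial.coeff_map (π k).toRingHom
    (p := ∏ i : Fin (k + 1), ∏ j : Fin (k + 1),
      (1 + Polynomial.C (X (Sum.inl i) * X (Sum.inr j) :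
          MvPolynomial (Fin (k + 1) ⊕ Fin (k + 1)) ℤ) * Polynomial.X)) n
  rw [hmap] at hc
  exact hc.symm

def κfun (k : ℕ) : Fin (k + 1) ⊕ Fin (k + 1) → MvPolynomial (Fin (k + 1) ⊕ Fin (k + 1)) ℤ :=
  fun v => if v = Sum.inl (Fin.last k) ∨ v = Sum.inr (Fin.last k) then 0 else X v

def κ (k : ℕ) : MvPolynomial (Fin (k + 1) ⊕ Fin (k + 1)) ℤ →ₐ[ℤ]
    MvPolynomial (Fin (k + 1) ⊕ Fin (k + 1)) ℤ :=
  aeval (κfun k)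

lemma κ_eq_rename_π (k : ℕ) (p : MvPolynomial (Fin (k + 1) ⊕ Fin (k + 1)) ℤ) :
    κ k p = rename (emb k) (π k p) := by
  have h : κ k = (rename (emb k)).comp (π k) := by
    apply MvPolynomial.algHom_ext
    intro v
    rw [κ, aeval_X, AlgHom.comp_apply]
    cases v with
    | inl i =>
      refine Fin.lastCases ?_ (fun i' => ?_) i
      · rw [π_X_inl_last, map_zero, κfun, if_pos (Or.inl rfl)]
      · rw [show (X (Sum.inl (Fin.castSucc i')) :
            MvPolynomial (Fin (k + 1) ⊕ Fin (k + 1)) ℤ) = X (emb k (Sum.inl i')) from rfl,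
          π_X_emb, rename_X]
        rw [κfun, if_neg]
        · rfl
        · rintro (h | h)
          · rw [Sum.inl.injEq] at h
            exact absurd h (Fin.castSucc_lt_last i').ne
          · exact Sum.inl_ne_inr h
    | inr i =>
      refine Fin.lastCases ?_ (fun i' => ?_) i
      · rw [π_X_inr_last, map_zero, κfun, if_pos (Or.inr rfl)]
      · rw [show (X (Sum.inr (Fin.castSucc i')) :
            MvPolynomial (Fin (k + 1) ⊕ Fin (k + 1)) ℤ) = X (emb k (Sum.inr i')) from rfl,
          π_X_emb, rename_X]
        rw [κfun, if_neg]
        · rfl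
        · rintro (h | h)
          · exact Sum.inr_ne_inl h
          · rw [Sum.inr.injEq] at h
            exact absurd h (Fin.castSucc_lt_last i').ne
  rw [h]
  rfl

lemma coeff_κ (k : ℕ) (D : MvPolynomial (Fin (k + 1) ⊕ Fin (k + 1)) ℤ)
    (m : (Fin (k + 1) ⊕ Fin (k + 1)) →₀ ℕ)
    (h1 : m (Sum.inl (Fin.last k)) = 0) (h2 : m (Sum.inr (Fin.last k)) = 0) :
    coeff m (κ k D) = coeff m D := by
  classical
  conv_lhs => rw [D.as_sum, map_sum]
  rw [MvPolynomial.coeff_sum]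
  have hterm : ∀ u ∈ D.support,
      coeff m (κ k (monomial u (coeff u D))) = if u = m then coeff u D else 0 := by
    intro u _
    by_cases hgood : u (Sum.inl (Fin.last k)) = 0 ∧ u (Sum.inr (Fin.last k)) = 0
    · have hκ : κ k (monomial u (coeff u D)) = monomial u (coeff u D) := by
        rw [κ, aeval_monomial, monomial_eq, algebraMap_eq]
        congr 1
        refine Finsupp.prod_congr fun v hv => ?_
        congr 1
        rw [κfun, if_neg]
        rintro (rfl | rfl)
        · exact (Finsupp.mem_support_iff.1 hv) hgood.1
        · exact (Finsupp.mem_support_iff.1 hv) hgood.2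
      rw [hκ, coeff_monomial]
    · have hκ : κ k (monomial u (coeff u D)) = 0 := by
        rw [κ, aeval_monomial]
        rcases not_and_or.1 hgood with hbad | hbad
        · have hmem : Sum.inl (Fin.last k) ∈ u.support := Finsupp.mem_support_iff.2 hbad
          rw [Finsupp.prod, Finset.prod_eq_zero hmem, mul_zero]
          rw [κfun, if_pos (Or.inl rfl)]
          exact zero_pow hbad
        · have hmem : Sum.inr (Fin.last k) ∈ u.support := Finsupp.mem_support_iff.2 hbad
          rw [Finsupp.prod, Finset.prod_eq_zero hmem, mul_zero]
          rw [κfun, if_pos (Or.inr rfl)]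
          exact zero_pow hbad
      rw [hκ, coeff_zero, if_neg]
      rintro rfl
      exact hgood ⟨h1, h2⟩
  rw [Finset.sum_congr rfl hterm, Finset.sum_ite_eq' D.support m (fun u => coeff u D)]
  split_ifs with hm
  · rfl
  · exact (MvPolynomial.notMem_support_iff.1 hm).symm

lemma exists_zero_inl (k : ℕ) (hk : n ≤ k) (u : (Fin (k + 1) ⊕ Fin (k + 1)) →₀ ℕ)
    (hw : Finsupp.weight (wR (k + 1)) u = n) : ∃ a : Fin (k + 1), u (Sum.inl a) = 0 := by
  by_contra h'
  push_neg at h'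
  have hsub : (Finset.univ.image (Sum.inl : Fin (k + 1) → Fin (k + 1) ⊕ Fin (k + 1)))
      ⊆ u.support := by
    intro v hv
    obtain ⟨a, _, rfl⟩ := Finset.mem_image.1 hv
    exact Finsupp.mem_support_iff.2 (h' a)
  have hcard : (Finset.univ.image (Sum.inl : Fin (k + 1) → Fin (k + 1) ⊕ Fin (k + 1))).card
      = k + 1 := by
    rw [Finset.card_image_of_injective _ Sum.inl_injective, Finset.card_univ, Fintype.card_fin]
  have hterm : ∀ v ∈ Finset.univ.image (Sum.inl : Fin (k + 1) → Fin (k + 1) ⊕ Fin (k + 1)),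
      1 ≤ u v • wR (k + 1) v := by
    intro v hv
    obtain ⟨a, _, rfl⟩ := Finset.mem_image.1 hv
    have h1 : 1 ≤ u (Sum.inl a) := Nat.one_le_iff_ne_zero.2 (h' a)
    simpa [wR] using h1
  have h1 : k + 1 ≤ ∑ v ∈ Finset.univ.image (Sum.inl : Fin (k + 1) → Fin (k + 1) ⊕ Fin (k + 1)),
      u v • wR (k + 1) v := by
    calc k + 1 = ∑ _v ∈ Finset.univ.image (Sum.inl : Fin (k + 1) → Fin (k + 1) ⊕ Fin (k + 1)),
        1 := by rw [Finset.sum_const, hcard, smul_eq_mul, mul_one]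
    _ ≤ _ := Finset.sum_le_sum hterm
  have h2 : (∑ v ∈ Finset.univ.image (Sum.inl : Fin (k + 1) → Fin (k + 1) ⊕ Fin (k + 1)),
      u v • wR (k + 1) v) ≤ ∑ v ∈ u.support, u v • wR (k + 1) v :=
    Finset.sum_le_sum_of_subset hsub
  have h3 : (∑ v ∈ u.support, u v • wR (k + 1) v) = n := by
    rw [← hw, Finsupp.weight_apply, Finsupp.sum]
  omega

lemma exists_zero_inr (k : ℕ) (hk : n ≤ k) (u : (Fin (k + 1) ⊕ Fin (k + 1)) →₀ ℕ)
    (hw : Finsupp.weight (wL (k + 1)) u = n) : ∃ b : Fin (k + 1), u (Sum.inr b) = 0 := by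
  by_contra h'
  push_neg at h'
  have hsub : (Finset.univ.image (Sum.inr : Fin (k + 1) → Fin (k + 1) ⊕ Fin (k + 1)))
      ⊆ u.support := by
    intro v hv
    obtain ⟨a, _, rfl⟩ := Finset.mem_image.1 hv
    exact Finsupp.mem_support_iff.2 (h' a)
  have hcard : (Finset.univ.image (Sum.inr : Fin (k + 1) → Fin (k + 1) ⊕ Fin (k + 1))).card
      = k + 1 := by
    rw [Finset.card_image_of_injective _ Sum.inr_injective, Finset.card_univ, Fintype.card_fin]
  have hterm : ∀ v ∈ Finset.univ.image (Sum.inr : Fin (k + 1) → Fin (k + 1) ⊕ Fin (k + 1)),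
      1 ≤ u v • wL (k + 1) v := by
    intro v hv
    obtain ⟨a, _, rfl⟩ := Finset.mem_image.1 hv
    have h1 : 1 ≤ u (Sum.inr a) := Nat.one_le_iff_ne_zero.2 (h' a)
    simpa [wL] using h1
  have h1 : k + 1 ≤ ∑ v ∈ Finset.univ.image (Sum.inr : Fin (k + 1) → Fin (k + 1) ⊕ Fin (k + 1)),
      u v • wL (k + 1) v := by
    calc k + 1 = ∑ _v ∈ Finset.univ.image (Sum.inr : Fin (k + 1) → Fin (k + 1) ⊕ Fin (k + 1)),
        1 := by rw [Finset.sum_const, hcard, smul_eq_mul, mul_one]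
    _ ≤ _ := Finset.sum_le_sum hterm
  have h2 : (∑ v ∈ Finset.univ.image (Sum.inr : Fin (k + 1) → Fin (k + 1) ⊕ Fin (k + 1)),
      u v • wL (k + 1) v) ≤ ∑ v ∈ u.support, u v • wL (k + 1) v :=
    Finset.sum_le_sum_of_subset hsub
  have h3 : (∑ v ∈ u.support, u v • wL (k + 1) v) = n := by
    rw [← hw, Finsupp.weight_apply, Finsupp.sum]
  omega

lemma step (k : ℕ) (hk : n ≤ k) (P : MvPolynomial (Fin n ⊕ Fin n) ℤ)
    (hPX : P.IsWeightedHomogeneous (wS n) n) (hPY : P.IsWeightedHomogeneous (wT n) n)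
    (h : A n k P = lhs n k) : A n (k + 1) P = lhs n (k + 1) := by
  have hD : lhs n (k + 1) - A n (k + 1) P = 0 := by
    set D := lhs n (k + 1) - A n (k + 1) P with hDdef
    by_contra hD0
    have hπ : π k D = 0 := by rw [hDdef, map_sub, π_lhs, π_A, h, sub_self]
    have hκ : κ k D = 0 := by rw [κ_eq_rename_π, hπ, map_zero]
    have hDR : D.IsWeightedHomogeneous (wR (k + 1)) n :=
      homog_sub (lhs_homog_R n (k + 1))
        (aeval_homog (Φ n (k + 1)) (wS n) (wR (k + 1)) (Φ_homog_R n (k + 1)) hPX)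
    have hDL : D.IsWeightedHomogeneous (wL (k + 1)) n :=
      homog_sub (lhs_homog_L n (k + 1))
        (aeval_homog (Φ n (k + 1)) (wT n) (wL (k + 1)) (Φ_homog_L n (k + 1)) hPY)
    obtain ⟨u, hu⟩ := MvPolynomial.support_nonempty.2 hD0
    obtain ⟨a, ha⟩ := exists_zero_inl n k hk u (hDR (mem_support_iff.1 hu))
    obtain ⟨b, hb⟩ := exists_zero_inr n k hk u (hDL (mem_support_iff.1 hu))
    set e₁ := Equiv.swap a (Fin.last k) with he₁
    set e₂ := Equiv.swap b (Fin.last k) with he₂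
    have hinj : Function.Injective (Sum.map ⇑e₁ ⇑e₂) :=
      Function.Injective.sumMap e₁.injective e₂.injective
    have hren : rename (Sum.map ⇑e₁ ⇑e₂) D = D := by
      rw [hDdef, map_sub, lhs_rename, A_rename]
    have hcoeff : coeff (Finsupp.mapDomain (Sum.map ⇑e₁ ⇑e₂) u) D = coeff u D := by
      have hc := coeff_rename_mapDomain (Sum.map ⇑e₁ ⇑e₂) hinj D u
      rwa [hren] at hc
    have h1 : (Finsupp.mapDomain (Sum.map ⇑e₁ ⇑e₂) u) (Sum.inl (Fin.last k)) = 0 := by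
      rw [show (Sum.inl (Fin.last k) : Fin (k + 1) ⊕ Fin (k + 1))
          = Sum.map ⇑e₁ ⇑e₂ (Sum.inl a) by
        rw [Sum.map_inl, he₁, Equiv.swap_apply_left]]
      rw [Finsupp.mapDomain_apply hinj]
      exact ha
    have h2 : (Finsupp.mapDomain (Sum.map ⇑e₁ ⇑e₂) u) (Sum.inr (Fin.last k)) = 0 := by
      rw [show (Sum.inr (Fin.last k) : Fin (k + 1) ⊕ Fin (k + 1))
          = Sum.map ⇑e₁ ⇑e₂ (Sum.inr b) by
        rw [Sum.map_inr, he₂, Equiv.swap_apply_left]]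
      rw [Finsupp.mapDomain_apply hinj]
      exact hb
    have hfin := coeff_κ k D _ h1 h2
    rw [hκ, coeff_zero] at hfin
    rw [hcoeff] at hfin
    exact (mem_support_iff.1 hu) hfin.symm
  have := sub_eq_zero.1 hD
  exact this.symm

lemma main : ∃ P : MvPolynomial (Fin n ⊕ Fin n) ℤ,
    ∀ k : ℕ, n ≤ k → A n k P = lhs n k := by
  obtain ⟨P, hP⟩ := exists_P n
  have hPX := P_homog_S n P hP
  have hPY := P_homog_T n P hP
  refine ⟨P, fun k hk => ?_⟩
  induction k, hk using Nat.le_induction with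
  | base => exact hP
  | succ k hk ih => exact step n k hk P hPX hPY ih

end
end Stmt14Aux


/-- For each `n ≥ 1` there is a universal integer polynomial `P_n` in `2n` variables such that
for every `k ≥ n`, the coefficient of `u^n` in `Π_{i,j=1}^{k} (1 + X_i Y_j u)` equals
`P_n (e_1(X), …, e_n(X); e_1(Y), …, e_n(Y))`, with `e_m` the elementary symmetric polynomials. -/
theorem stmt14 (n : ℕ) (hn : 1 ≤ n) :
    ∃ P : MvPolynomial (Fin n ⊕ Fin n) ℤ,
      ∀ k : ℕ, n ≤ k →
        Polynomial.coeff
          (∏ i : Fin k, ∏ j : Fin k,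
            (1 + Polynomial.C (MvPolynomial.X (Sum.inl i) * MvPolynomial.X (Sum.inr j) :
                MvPolynomial (Fin k ⊕ Fin k) ℤ) * Polynomial.X)) n =
        MvPolynomial.aeval
          (Sum.elim
            (fun m : Fin n =>
              MvPolynomial.rename Sum.inl (MvPolynomial.esymm (Fin k) ℤ ((m : ℕ) + 1)))
            (fun m : Fin n =>
              MvPolynomial.rename Sum.inr (MvPolynomial.esymm (Fin k) ℤ ((m : ℕ) + 1)))) P := by
  obtain ⟨P, hP⟩ := Stmt14Aux.main n
  exact ⟨P, fun k hk => (hP k hk).symm⟩
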